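/- Let p be a prime and n ≥ 1. Set G' = { [[a,b],[c,d]] ∈ GL_2(Z/p^{n+1}Z) : a ≡ 1 and c ≡ 0 (mod p^n) } and Γ = { [[1,x],[0,y]] ∈ GL_2(Z/p^{n+1}Z) }. Then for every subgroup G ≤ G', the index [G : G ∩ Γ] divides p^2 or divides p(p-1). -/

import Mathlib

open Matrix


private lemma aux_mem {N m : ℕ} (hd : m ∣ N) (y : ZMod N) :
    ZMod.castHom hd (ZMod m) ((m : ZMod N) * y) = 0 := by
  rw [_root_.map_mul, map_natCast, ZMod.natCast_self, zero_mul]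

private lemma aux_rep {N m : ℕ} [NeZero N] (hd : m ∣ N) (x : ZMod N)
    (hx : ZMod.castHom hd (ZMod m) x = 0) : ∃ y : ZMod N, x = (m : ZMod N) * y := by
  have hx' : ((x.val : ℕ) : ZMod m) = 0 := by
    calc ((x.val : ℕ) : ZMod m) = ZMod.castHom hd (ZMod m) ((x.val : ℕ) : ZMod N) :=
          (map_natCast _ _).symm
      _ = ZMod.castHom hd (ZMod m) x := by rw [ZMod.natCast_zmod_val]
      _ = 0 := hx
  obtain ⟨k, hk⟩ := (ZMod.natCast_eq_zero_iff _ _).mp hx'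
  refine ⟨(k : ZMod N), ?_⟩
  conv_lhs => rw [← ZMod.natCast_zmod_val x]
  rw [hk]
  push_cast
  ring

private lemma aux_card {p n : ℕ} (hp : p.Prime) (h : p ^ n ∣ p ^ (n + 1))
    (Ik : AddSubgroup (ZMod (p ^ (n + 1))))
    (hIk : ∀ x, x ∈ Ik ↔ ZMod.castHom h (ZMod (p ^ n)) x = 0) :
    Nat.card Ik = p := by
  haveI : NeZero (p ^ (n + 1)) := ⟨pow_ne_zero _ hp.ne_zero⟩
  haveI : NeZero (p ^ n) := ⟨pow_ne_zero _ hp.ne_zero⟩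
  set f := ZMod.castHom h (ZMod (p ^ n)) with hf
  have hsurj : Function.Surjective f.toAddMonoidHom := fun a =>
    ⟨((a.val : ℕ) : ZMod (p ^ (n + 1))), by
      show f _ = _
      rw [map_natCast, ZMod.natCast_zmod_val]⟩
  have hker : f.toAddMonoidHom.ker = Ik := by
    ext x
    rw [AddMonoidHom.mem_ker, hIk x]; rfl
  have e := QuotientAddGroup.quotientKerEquivOfSurjective f.toAddMonoidHom hsurj
  rw [← hker]
  have h1 := AddSubgroup.card_eq_card_quotient_mul_card_addSubgroup f.toAddMonoidHom.ker
  rw [Nat.card_zmod, Nat.card_congr e.toEquiv, Nat.card_zmod] at h1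
  have hpn : 0 < p ^ n := pow_pos hp.pos n
  have h2 : p ^ n * p = p ^ n * Nat.card f.toAddMonoidHom.ker := by
    rw [← h1, pow_succ]
  exact (Nat.eq_of_mul_eq_mul_left hpn h2).symm


set_option maxHeartbeats 1600000 in
set_option synthInstance.maxHeartbeats 1000000 in
/-- Let `p` be prime, `n ≥ 1`,
`G' = { [[a,b],[c,d]] ∈ GL₂(ℤ/p^{n+1}ℤ) : a ≡ 1, c ≡ 0 (mod p^n) }` and
`Γ = { [[1,x],[0,y]] ∈ GL₂(ℤ/p^{n+1}ℤ) }`. For every subgroup `G ≤ G'`, the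
index `[G : G ∩ Γ]` divides `p²` or divides `p(p-1)`. -/
theorem index_div_of_le_Gprime (p : ℕ) (hp : p.Prime) (n : ℕ) (hn : 1 ≤ n)
    (h : (p ^ n : ℕ) ∣ p ^ (n + 1))
    (Γ : Subgroup (GL (Fin 2) (ZMod (p ^ (n + 1)))))
    (hΓ : (Γ : Set (GL (Fin 2) (ZMod (p ^ (n + 1))))) =
      {g : GL (Fin 2) (ZMod (p ^ (n + 1))) |
        (g : Matrix (Fin 2) (Fin 2) (ZMod (p ^ (n + 1)))) 0 0 = 1 ∧
        (g : Matrix (Fin 2) (Fin 2) (ZMod (p ^ (n + 1)))) 1 0 = 0})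
    (G : Subgroup (GL (Fin 2) (ZMod (p ^ (n + 1)))))
    (hG : ∀ g ∈ G,
      ZMod.castHom h (ZMod (p ^ n)) ((g : Matrix (Fin 2) (Fin 2) (ZMod (p ^ (n + 1)))) 0 0) = 1 ∧
      ZMod.castHom h (ZMod (p ^ n)) ((g : Matrix (Fin 2) (Fin 2) (ZMod (p ^ (n + 1)))) 1 0) = 0) :
    Γ.relIndex G ∣ p ^ 2 ∨ Γ.relIndex G ∣ p * (p - 1) := by
  haveI : Fact p.Prime := ⟨hp⟩
  haveI : NeZero (p ^ (n + 1)) := ⟨pow_ne_zero _ hp.ne_zero⟩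
  set R := ZMod (p ^ (n + 1)) with hRdef
  set f := ZMod.castHom h (ZMod (p ^ n)) with hfdef
  -- basic ring facts
  have hmul : ∀ x y : R, f x = 0 → f y = 0 → x * y = 0 := by
    intro x y hx hy
    obtain ⟨a, rfl⟩ := aux_rep h x hx
    obtain ⟨b, rfl⟩ := aux_rep h y hy
    have e : ((p ^ n : ℕ) : R) * ((p ^ n : ℕ) : R) = 0 := by
      rw [← Nat.cast_mul,
        show p ^ n * p ^ n = p ^ (n + 1) * p ^ (n - 1) by
          rw [← pow_add, ← pow_add]; congr 1; omega,
        Nat.cast_mul, ZMod.natCast_self, zero_mul]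
    calc ((p ^ n : ℕ) : R) * a * (((p ^ n : ℕ) : R) * b)
        = ((p ^ n : ℕ) : R) * ((p ^ n : ℕ) : R) * (a * b) := by ring
      _ = 0 := by rw [e, zero_mul]
  have hp0 : ∀ x : R, f x = 0 → (p : R) * x = 0 := by
    intro x hx
    obtain ⟨a, rfl⟩ := aux_rep h x hx
    calc (p : R) * (((p ^ n : ℕ) : R) * a) = ((p ^ (n + 1) : ℕ) : R) * a := by
          push_cast; ring
      _ = 0 := by rw [ZMod.natCast_self, zero_mul]
  have hdp : p ∣ p ^ (n + 1) := dvd_pow_self p (Nat.succ_ne_zero n)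
  set fp := ZMod.castHom hdp (ZMod p) with hfpdef
  have hfp : ∀ x : R, f x = 0 → fp x = 0 := by
    intro x hx
    obtain ⟨a, rfl⟩ := aux_rep h x hx
    rw [_root_.map_mul, map_natCast,
      (ZMod.natCast_eq_zero_iff _ _).mpr (dvd_pow_self p (by omega : n ≠ 0)),
      zero_mul]
  have hact1 : ∀ y : R, fp y = 1 → ∀ t : R, f t = 0 → y * t = t := by
    intro y hy t ht
    have h1 : fp (y - 1) = 0 := by rw [map_sub, hy, _root_.map_one, sub_self]
    obtain ⟨z, hz⟩ := aux_rep hdp (y - 1) h1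
    have h2 : (p : R) * t = 0 := hp0 t ht
    have h3 : (y - 1) * t = 0 := by
      rw [hz]
      calc (p : R) * z * t = z * ((p : R) * t) := by ring
        _ = 0 := by rw [h2, mul_zero]
    linear_combination h3
  -- the additive subgroup of "multiples of p^n"
  set Ik : AddSubgroup R :=
    { carrier := {x | f x = 0}
      add_mem' := by
        intro a b ha hb
        simp only [Set.mem_setOf_eq] at *
        rw [map_add, ha, hb, add_zero]
      zero_mem' := by simp
      neg_mem' := by
        intro a ha
        simp only [Set.mem_setOf_eq] at *
        rw [map_neg, ha, neg_zero] } with hIkdef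
  have hIk : ∀ x : R, x ∈ Ik ↔ f x = 0 := fun x => Iff.rfl
  have hcard : Nat.card Ik = p := aux_card hp h Ik hIk
  -- the subgroup of upper triangular matrices
  set U : Subgroup (GL (Fin 2) R) :=
    { carrier := {g | (g : Matrix (Fin 2) (Fin 2) R) 1 0 = 0}
      one_mem' := by
        show ((1 : GL (Fin 2) R) : Matrix (Fin 2) (Fin 2) R) 1 0 = 0
        rw [Units.val_one]
        exact Matrix.one_apply_ne (by decide)
      mul_mem' := by
        intro a b ha hb
        simp only [Set.mem_setOf_eq] at *
        rw [Units.val_mul, Matrix.mul_apply, Fin.sum_univ_two, ha, hb, zero_mul, mul_zero,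
          add_zero]
      inv_mem' := by
        intro g hg
        simp only [Set.mem_setOf_eq] at *
        show ((g⁻¹ : GL (Fin 2) R) : Matrix (Fin 2) (Fin 2) R) 1 0 = 0
        rw [Matrix.coe_units_inv, Matrix.inv_def, Matrix.adjugate_fin_two,
          Matrix.smul_apply]
        simp [hg] } with hUdef
  have hUmem : ∀ g : GL (Fin 2) R, g ∈ U ↔ (g : Matrix (Fin 2) (Fin 2) R) 1 0 = 0 :=
    fun g => Iff.rfl
  have hΓmem : ∀ g : GL (Fin 2) R,
      g ∈ Γ ↔ (g : Matrix (Fin 2) (Fin 2) R) 0 0 = 1 ∧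
        (g : Matrix (Fin 2) (Fin 2) R) 1 0 = 0 := by
    intro g
    rw [← SetLike.mem_coe, hΓ]
    rfl
  have hΓG : Γ ⊓ G ≤ U ⊓ G := by
    intro g hg
    rw [Subgroup.mem_inf] at *
    exact ⟨(hUmem g).mpr ((hΓmem g).mp hg.1).2, hg.2⟩
  -- Claim A : (Γ ⊓ G).relIndex (U ⊓ G) ∣ p
  have hA : (Γ ⊓ G).relIndex (U ⊓ G) ∣ p := by
    have hmem00 : ∀ g : ↥(U ⊓ G),
        f (((g : GL (Fin 2) R) : Matrix (Fin 2) (Fin 2) R) 0 0 - 1) = 0 := by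
      intro g
      have hgG : (g : GL (Fin 2) R) ∈ G := (Subgroup.mem_inf.mp g.2).2
      rw [map_sub, (hG _ hgG).1, _root_.map_one, sub_self]
    set ψ : ↥(U ⊓ G) →* Multiplicative ↥Ik :=
      { toFun := fun g => Multiplicative.ofAdd
          (⟨((g : GL (Fin 2) R) : Matrix (Fin 2) (Fin 2) R) 0 0 - 1, hmem00 g⟩ : ↥Ik)
        map_one' := by
          rw [ofAdd_eq_one]
          refine Subtype.ext ?_
          show (((1 : ↥(U ⊓ G)) : GL (Fin 2) R) : Matrix (Fin 2) (Fin 2) R) 0 0 - 1 = 0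
          rw [OneMemClass.coe_one, Units.val_one, Matrix.one_apply_eq, sub_self]
        map_mul' := by
          intro g h'
          rw [← ofAdd_add]
          refine congrArg Multiplicative.ofAdd (Subtype.ext ?_)
          have hh10 : ((h' : GL (Fin 2) R) : Matrix (Fin 2) (Fin 2) R) 1 0 = 0 :=
            (Subgroup.mem_inf.mp h'.2).1
          have e := hmul _ _ (hmem00 g) (hmem00 h')
          show (((g * h' : ↥(U ⊓ G)) : GL (Fin 2) R) : Matrix (Fin 2) (Fin 2) R) 0 0 - 1
              = (((g : GL (Fin 2) R) : Matrix (Fin 2) (Fin 2) R) 0 0 - 1) +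
                (((h' : GL (Fin 2) R) : Matrix (Fin 2) (Fin 2) R) 0 0 - 1)
          rw [Subgroup.coe_mul, Units.val_mul, Matrix.mul_apply, Fin.sum_univ_two, hh10,
            mul_zero, add_zero]
          linear_combination e } with hψdef
    have hkerψ : ψ.ker = (Γ ⊓ G).subgroupOf (U ⊓ G) := by
      ext g
      rw [MonoidHom.mem_ker, Subgroup.mem_subgroupOf, Subgroup.mem_inf]
      have hg10 : ((g : GL (Fin 2) R) : Matrix (Fin 2) (Fin 2) R) 1 0 = 0 :=
        (Subgroup.mem_inf.mp g.2).1
      have hgG : (g : GL (Fin 2) R) ∈ G := (Subgroup.mem_inf.mp g.2).2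
      have hψg : ψ g = Multiplicative.ofAdd
          (⟨((g : GL (Fin 2) R) : Matrix (Fin 2) (Fin 2) R) 0 0 - 1, hmem00 g⟩ : ↥Ik) := rfl
      constructor
      · intro hg
        rw [hψg, ofAdd_eq_one] at hg
        have h00 : ((g : GL (Fin 2) R) : Matrix (Fin 2) (Fin 2) R) 0 0 = 1 := by
          have := Subtype.ext_iff.mp hg
          simpa [sub_eq_zero] using this
        exact ⟨(hΓmem _).mpr ⟨h00, hg10⟩, hgG⟩
      · rintro ⟨hgΓ, -⟩
        have h00 := ((hΓmem _).mp hgΓ).1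
        rw [hψg, ofAdd_eq_one]
        exact Subtype.ext (by simpa [sub_eq_zero] using h00)
    have heq : (Γ ⊓ G).relIndex (U ⊓ G) = Nat.card ψ.range := by
      rw [Subgroup.relIndex, ← hkerψ, Subgroup.index_ker]
    rw [heq]
    have h2 : Nat.card ψ.range ∣ Nat.card (Multiplicative ↥Ik) :=
      Subgroup.card_subgroup_dvd_card _
    rwa [Nat.card_congr Multiplicative.toAdd, hcard] at h2
  -- Claim B
  have hB : (U ⊓ G).relIndex G ∣ p ∨ (U ⊓ G).relIndex G ∣ p - 1 := by
    have hmemS : ∀ (g : ↥G) (t : ↥Ik),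
        f (((g : GL (Fin 2) R) : Matrix (Fin 2) (Fin 2) R) 1 0 +
          ((g : GL (Fin 2) R) : Matrix (Fin 2) (Fin 2) R) 1 1 * (t : R)) = 0 := by
      intro g t
      rw [map_add, _root_.map_mul, (hG _ g.2).2, (hIk _).mp t.2, mul_zero, add_zero]
    letI act : MulAction ↥G ↥Ik :=
      { smul := fun g t => ⟨_, hmemS g t⟩
        one_smul := fun t => Subtype.ext (by
          show (((1 : ↥G) : GL (Fin 2) R) : Matrix (Fin 2) (Fin 2) R) 1 0 +
              (((1 : ↥G) : GL (Fin 2) R) : Matrix (Fin 2) (Fin 2) R) 1 1 * (t : R) = (t : R)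
          rw [OneMemClass.coe_one, Units.val_one,
            Matrix.one_apply_ne (by decide : (1 : Fin 2) ≠ 0), Matrix.one_apply_eq, one_mul,
            zero_add])
        mul_smul := fun g h' t => Subtype.ext (by
          show (((g * h' : ↥G) : GL (Fin 2) R) : Matrix (Fin 2) (Fin 2) R) 1 0 +
              (((g * h' : ↥G) : GL (Fin 2) R) : Matrix (Fin 2) (Fin 2) R) 1 1 * (t : R)
              = ((g : GL (Fin 2) R) : Matrix (Fin 2) (Fin 2) R) 1 0 +
                ((g : GL (Fin 2) R) : Matrix (Fin 2) (Fin 2) R) 1 1 *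
                  (((h' : GL (Fin 2) R) : Matrix (Fin 2) (Fin 2) R) 1 0 +
                    ((h' : GL (Fin 2) R) : Matrix (Fin 2) (Fin 2) R) 1 1 * (t : R))
          have e1 : ((g : GL (Fin 2) R) : Matrix (Fin 2) (Fin 2) R) 1 0 *
              (((h' : GL (Fin 2) R) : Matrix (Fin 2) (Fin 2) R) 0 0 - 1) = 0 :=
            hmul _ _ (hG _ g.2).2
              (by rw [map_sub, (hG _ h'.2).1, _root_.map_one, sub_self])
          have e2 : ((g : GL (Fin 2) R) : Matrix (Fin 2) (Fin 2) R) 1 0 * (t : R) = 0 :=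
            hmul _ _ (hG _ g.2).2 ((hIk _).mp t.2)
          simp only [Subgroup.coe_mul, Units.val_mul, Matrix.mul_apply, Fin.sum_univ_two]
          linear_combination e1 + ((h' : GL (Fin 2) R) : Matrix (Fin 2) (Fin 2) R) 0 1 * e2) }
    have hsmul : ∀ (g : ↥G) (t : ↥Ik), g • t = (⟨((g : GL (Fin 2) R) : Matrix (Fin 2) (Fin 2) R) 1 0 +
          ((g : GL (Fin 2) R) : Matrix (Fin 2) (Fin 2) R) 1 1 * (t : R), hmemS g t⟩ : ↥Ik) :=
      fun g t => rfl
    have hstab : MulAction.stabilizer ↥G (0 : ↥Ik) = (U ⊓ G).subgroupOf G := by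
      ext g
      rw [MulAction.mem_stabilizer_iff, Subgroup.mem_subgroupOf, Subgroup.mem_inf]
      constructor
      · intro hg
        rw [hsmul] at hg
        have h1 := congrArg Subtype.val hg
        simp only [ZeroMemClass.coe_zero, mul_zero, add_zero] at h1
        exact ⟨(hUmem _).mpr h1, g.2⟩
      · rintro ⟨hgU, -⟩
        rw [hsmul]
        refine Subtype.ext ?_
        simp only [ZeroMemClass.coe_zero, mul_zero, add_zero]
        exact (hUmem _).mp hgU
    have hrel : (U ⊓ G).relIndex G = (MulAction.stabilizer ↥G (0 : ↥Ik)).index := by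
      rw [Subgroup.relIndex, hstab]
    by_cases hcase : ∃ g : ↥G, ((g : GL (Fin 2) R) : Matrix (Fin 2) (Fin 2) R) 1 0 ≠ 0 ∧
        fp (((g : GL (Fin 2) R) : Matrix (Fin 2) (Fin 2) R) 1 1) = 1
    · left
      obtain ⟨g₀, hg₀ne, hg₀d⟩ := hcase
      set c : ↥Ik := ⟨((g₀ : GL (Fin 2) R) : Matrix (Fin 2) (Fin 2) R) 1 0, (hG _ g₀.2).2⟩
        with hcdef
      have hc0 : c ≠ 0 := by
        intro hc
        exact hg₀ne (by simpa [hcdef, Subtype.ext_iff] using hc)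
      have hsm : ∀ t : ↥Ik, g₀ • t = t + c := by
        intro t
        rw [hsmul]
        refine Subtype.ext ?_
        show ((g₀ : GL (Fin 2) R) : Matrix (Fin 2) (Fin 2) R) 1 0 +
            ((g₀ : GL (Fin 2) R) : Matrix (Fin 2) (Fin 2) R) 1 1 * (t : R)
            = (t : R) + ((g₀ : GL (Fin 2) R) : Matrix (Fin 2) (Fin 2) R) 1 0
        rw [hact1 _ hg₀d _ ((hIk _).mp t.2)]
        ring
      have hpow : ∀ k : ℕ, (g₀ ^ k) • (0 : ↥Ik) = k • c := by
        intro k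
        induction k with
        | zero => rw [pow_zero, one_smul, zero_nsmul]
        | succ k ih =>
          calc g₀ ^ (k + 1) • (0 : ↥Ik) = (g₀ * g₀ ^ k) • (0 : ↥Ik) :=
                congrArg (fun z : ↥G => z • (0 : ↥Ik)) (pow_succ' g₀ k)
            _ = g₀ • (g₀ ^ k • (0 : ↥Ik)) := mul_smul _ _ _
            _ = g₀ • (k • c) := by rw [ih]
            _ = k • c + c := hsm _
            _ = (k + 1) • c := (succ_nsmul c k).symm
      have hpc : p • c = 0 := by
        refine Subtype.ext ?_
        show ((p • c : ↥Ik) : R) = 0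
        rw [AddSubmonoidClass.coe_nsmul, nsmul_eq_mul]
        exact hp0 _ ((hIk _).mp c.2)
      have hgen : ∀ t : ↥Ik, ∃ k : ℕ, k • c = t := by
        have hZ : AddSubgroup.zmultiples c = ⊤ := by
          have hdvd : Nat.card (AddSubgroup.zmultiples c) ∣ Nat.card ↥Ik :=
            AddSubgroup.card_addSubgroup_dvd_card _
          rw [hcard] at hdvd
          rcases hp.eq_one_or_self_of_dvd _ hdvd with h1 | h1
          · exfalso
            have hbot : AddSubgroup.zmultiples c = ⊥ := AddSubgroup.card_eq_one.mp h1
            have hcbot : c ∈ (⊥ : AddSubgroup ↥Ik) := hbot ▸ AddSubgroup.mem_zmultiples c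
            exact hc0 (AddSubgroup.mem_bot.mp hcbot)
          · exact AddSubgroup.eq_top_of_card_eq _ (by rw [h1, hcard])
        intro t
        have ht : t ∈ AddSubgroup.zmultiples c := by rw [hZ]; trivial
        obtain ⟨k, hk⟩ := AddSubgroup.mem_zmultiples_iff.mp ht
        refine ⟨(k % (p : ℤ)).toNat, ?_⟩
        have hppos : (0 : ℤ) < (p : ℤ) := by exact_mod_cast hp.pos
        have hkc : (((k % (p : ℤ)).toNat : ℤ)) = k % (p : ℤ) :=
          Int.toNat_of_nonneg (Int.emod_nonneg k (ne_of_gt hppos))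
        have hpz : ((p : ℤ)) • c = 0 := by
          rw [natCast_zsmul]
          exact hpc
        calc ((k % (p : ℤ)).toNat) • c = (((k % (p : ℤ)).toNat : ℤ)) • c :=
              (natCast_zsmul _ _).symm
          _ = (k % (p : ℤ)) • c := by rw [hkc]
          _ = (k % (p : ℤ)) • c + ((k / (p : ℤ)) * (p : ℤ)) • c := by
              rw [mul_zsmul, hpz, smul_zero, add_zero]
          _ = (k % (p : ℤ) + (k / (p : ℤ)) * (p : ℤ)) • c := by rw [add_zsmul]
          _ = k • c := by rw [Int.emod_add_ediv_mul k (p : ℤ)]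
          _ = t := hk
      have horb : MulAction.orbit ↥G (0 : ↥Ik) = Set.univ := by
        apply Set.eq_univ_of_forall
        intro t
        obtain ⟨k, hk⟩ := hgen t
        have hmem := MulAction.mem_orbit (0 : ↥Ik) (g₀ ^ k)
        rwa [hpow, hk] at hmem
      rw [hrel, MulAction.index_stabilizer, horb, Set.ncard_univ, hcard]
    · right
      push_neg at hcase
      have hc2 : ∀ g : ↥G, fp (((g : GL (Fin 2) R) : Matrix (Fin 2) (Fin 2) R) 1 1) = 1 →
          ((g : GL (Fin 2) R) : Matrix (Fin 2) (Fin 2) R) 1 0 = 0 := by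
        intro g hg1
        by_contra hne
        exact hcase g hne hg1
      set m0 : ↥G →* ZMod p :=
        { toFun := fun g => fp (((g : GL (Fin 2) R) : Matrix (Fin 2) (Fin 2) R) 1 1)
          map_one' := by
            simp only [OneMemClass.coe_one, Units.val_one, Matrix.one_apply_eq, _root_.map_one]
          map_mul' := by
            intro g h'
            show fp ((((g * h' : ↥G) : GL (Fin 2) R) : Matrix (Fin 2) (Fin 2) R) 1 1)
                = fp (((g : GL (Fin 2) R) : Matrix (Fin 2) (Fin 2) R) 1 1) *
                  fp (((h' : GL (Fin 2) R) : Matrix (Fin 2) (Fin 2) R) 1 1)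
            rw [Subgroup.coe_mul, Units.val_mul, Matrix.mul_apply, Fin.sum_univ_two, map_add,
              _root_.map_mul, _root_.map_mul, hfp _ (hG _ g.2).2, zero_mul, zero_add] }
        with hm0def
      have hkerδ : m0.toHomUnits.ker ≤ (U ⊓ G).subgroupOf G := by
        intro g hg
        rw [MonoidHom.mem_ker] at hg
        have h1 : m0 g = 1 := by
          have h2 := congrArg Units.val hg
          rwa [MonoidHom.coe_toHomUnits, Units.val_one] at h2
        have h10 := hc2 g h1
        rw [Subgroup.mem_subgroupOf, Subgroup.mem_inf]
        exact ⟨(hUmem _).mpr h10, g.2⟩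
      rw [Subgroup.relIndex]
      calc ((U ⊓ G).subgroupOf G).index ∣ m0.toHomUnits.ker.index :=
            Subgroup.index_dvd_of_le hkerδ
        _ = Nat.card m0.toHomUnits.range := Subgroup.index_ker _
        _ ∣ Nat.card (ZMod p)ˣ := Subgroup.card_subgroup_dvd_card _
        _ = p - 1 := by rw [Nat.card_eq_fintype_card, ZMod.card_units]
  have hkey : (Γ ⊓ G).relIndex (U ⊓ G) * (U ⊓ G).relIndex G = Γ.relIndex G := by
    rw [Subgroup.relIndex_mul_relIndex _ _ _ hΓG inf_le_right, Subgroup.inf_relIndex_right]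
  rcases hB with hB | hB
  · left
    rw [← hkey, pow_two]
    exact mul_dvd_mul hA hB
  · right
    rw [← hkey]
    exact mul_dvd_mul hA hB
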